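/- Let n be a positive integer divisible by 4. For every tournament T on n vertices there exists a set of n dice, each with n + 1 sides (a function X : Fin n → Fin (n+1) → ℕ), that realizes T. -/

import Mathlib

/-- The number of face wins of die `D` over die `E`: the number of pairs `(a, b)`
of faces with `D a > E b`. -/
def faceWins (k : ℕ) (D E : Fin k → ℕ) : ℕ :=
  (Finset.univ.filter (fun p : Fin k × Fin k => D p.1 > E p.2)).card


open Finset in
lemma sum_ite_lt' (N c : ℕ) :
    (∑ t ∈ Finset.range N, if t < c then (1:ℕ) else 0) = min c N := by
  induction N with
  | zero => simp
  | succ N ih => rw [Finset.sum_range_succ, ih]; split_ifs <;> omega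

open Finset in
lemma sum_ite_nlt' (N c : ℕ) :
    (∑ t ∈ Finset.range N, if t < c then (0:ℕ) else 1) = N - min c N := by
  induction N with
  | zero => simp
  | succ N ih => rw [Finset.sum_range_succ, ih]; split_ifs <;> omega

set_option maxHeartbeats 2000000 in
open Classical in
theorem exists_orders (k : ℕ) : ∀ (V : Type) [Fintype V] [DecidableEq V],
    Fintype.card V = 2*k → ∀ (T : V → V → Prop),
    (∀ i, ¬ T i i) → (∀ i j : V, i ≠ j → (T i j ↔ ¬ T j i)) →
    ∃ F : ℕ → V → ℤ,
      ∀ i j, i ≠ j →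
        ((Finset.range (2*k+1)).filter (fun t => F t j < F t i)).card
          = k + (if T i j then 1 else 0) := by
  induction k with
  | zero =>
    intro V _ _ hcard T hirr htot
    have hE : IsEmpty V := Fintype.card_eq_zero_iff.mp (by omega)
    exact ⟨fun _ _ => 0, fun i j _ => hE.elim i⟩
  | succ k ih =>
    intro V' _ _ hcard T' hirr htot
    classical
    have h2 : 1 < Fintype.card V' := by omega
    obtain ⟨u, v, huv⟩ := Fintype.exists_pair_of_one_lt_card h2
    set Vs : Finset V' := ({u, v} : Finset V')ᶜ with hVsdef
    have hnu : u ∉ Vs := by simp [hVsdef]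
    have hnv : v ∉ Vs := by simp [hVsdef]
    have hmem : ∀ x : V', x ∈ Vs ↔ (x ≠ u ∧ x ≠ v) := by intro x; simp [hVsdef]
    have hcV : Fintype.card {x // x ∈ Vs} = 2*k := by
      rw [Fintype.card_coe, hVsdef, Finset.card_compl]
      rw [Finset.card_insert_of_notMem (by simp [huv]), Finset.card_singleton]
      omega
    obtain ⟨F, hF⟩ := ih {x // x ∈ Vs} hcV (fun a b => T' a.1 b.1)
      (fun a => hirr a.1)
      (fun a b hab => htot a.1 b.1 (fun h => hab (Subtype.ext h)))
    set e : {x // x ∈ Vs} ≃ Fin (Fintype.card {x // x ∈ Vs}) := Fintype.equivFin _ with hedef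
    have hιlt : ∀ x : {x // x ∈ Vs}, (e x : ℕ) < 2*k := fun x => hcV ▸ (e x).isLt
    have hιne : ∀ x y : {x // x ∈ Vs}, x ≠ y → (e x : ℕ) ≠ (e y : ℕ) :=
      fun x y hxy h => hxy (e.injective (Fin.ext h))
    set Mt : ℕ → ℤ := fun t =>
      ((Finset.univ.sup fun x : {x // x ∈ Vs} => (F t x).natAbs : ℕ) : ℤ) with hMtdef
    have hMt : ∀ t (x : {x // x ∈ Vs}), -(Mt t) ≤ F t x ∧ F t x ≤ Mt t := by
      intro t x
      have h1 : (F t x).natAbs ≤ (Finset.univ.sup fun x : {x // x ∈ Vs} => (F t x).natAbs) :=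
        Finset.le_sup (f := fun x => (F t x).natAbs) (Finset.mem_univ x)
      simp only [hMtdef]
      omega
    set K : ℤ := 2*(k:ℤ)+1 with hKdef
    set ρ₁ : V' → ℤ := fun x =>
      if hx : x ∈ Vs then
        K * (if T' v x then (if T' u x then 1 else 3) else (if T' u x then 0 else 5))
          + ((e ⟨x, hx⟩ : ℕ) : ℤ)
      else if x = u then K * 2 else K * 4 with hρ₁def
    set ρ₂ : V' → ℤ := fun x =>
      if hx : x ∈ Vs then
        K * (if T' v x then (if T' u x then 2 else 1) else (if T' u x then 4 else 0))
          - ((e ⟨x, hx⟩ : ℕ) : ℤ)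
      else if x = u then K * 5 else K * 3 with hρ₂def
    set nu : ℕ := k + (if T' u v then 1 else 0) with hnudef
    set F' : ℕ → V' → ℤ := fun t x =>
      if ht : t < 2*k+1 then
        (if hx : x ∈ Vs then F t ⟨x, hx⟩
         else (if t < k then 1 else -1) * (Mt t + 2)
              + (if x = u then (if t < nu then 1 else 0) else (if t < nu then 0 else 1)))
      else if t = 2*k+1 then ρ₁ x else ρ₂ x with hF'def
    -- value lemmas
    have hvx : ∀ t, t < 2*k+1 → ∀ (x : V') (hx : x ∈ Vs), F' t x = F t ⟨x, hx⟩ := by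
      intro t ht x hx; simp only [hF'def]; rw [dif_pos ht, dif_pos hx]
    have hvu : ∀ t, t < 2*k+1 →
        F' t u = (if t < k then (1:ℤ) else -1) * (Mt t + 2) + (if t < nu then 1 else 0) := by
      intro t ht; simp only [hF'def]; rw [dif_pos ht, dif_neg hnu]; simp
    have hvv : ∀ t, t < 2*k+1 →
        F' t v = (if t < k then (1:ℤ) else -1) * (Mt t + 2) + (if t < nu then 0 else 1) := by
      intro t ht; simp only [hF'def]; rw [dif_pos ht, dif_neg hnv, if_neg (Ne.symm huv)]
    have hv1 : ∀ x : V', F' (2*k+1) x = ρ₁ x := by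
      intro x; simp only [hF'def]; rw [dif_neg (by omega)]; simp
    have hv2 : ∀ x : V', F' (2*k+1+1) x = ρ₂ x := by
      intro x; simp only [hF'def]; rw [dif_neg (by omega), if_neg (by omega)]
    refine ⟨F', ?_⟩
    intro i j hij
    have hsplit : 2*(k+1)+1 = (2*k+1)+1+1 := by ring
    rw [Finset.card_filter, hsplit, Finset.sum_range_succ, Finset.sum_range_succ,
      hv1 i, hv1 j, hv2 i, hv2 j]
    have hρ1u : ρ₁ u = K*2 := by simp only [hρ₁def]; rw [dif_neg hnu]; simp
    have hρ1v : ρ₁ v = K*4 := by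
      simp only [hρ₁def]; rw [dif_neg hnv, if_neg (Ne.symm huv)]
    have hρ2u : ρ₂ u = K*5 := by simp only [hρ₂def]; rw [dif_neg hnu]; simp
    have hρ2v : ρ₂ v = K*3 := by
      simp only [hρ₂def]; rw [dif_neg hnv, if_neg (Ne.symm huv)]
    have hρ1x : ∀ (x : V') (hx : x ∈ Vs), ρ₁ x
        = K * (if T' v x then (if T' u x then 1 else 3) else (if T' u x then 0 else 5))
          + ((e ⟨x, hx⟩ : ℕ) : ℤ) := by
      intro x hx; simp only [hρ₁def]; rw [dif_pos hx]
    have hρ2x : ∀ (x : V') (hx : x ∈ Vs), ρ₂ x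
        = K * (if T' v x then (if T' u x then 2 else 1) else (if T' u x then 4 else 0))
          - ((e ⟨x, hx⟩ : ℕ) : ℤ) := by
      intro x hx; simp only [hρ₂def]; rw [dif_pos hx]
    by_cases hiu : i = u
    · by_cases hjv : j = v
      · -- case (u, v)
        rw [hiu, hjv]
        have hold : ∀ t ∈ Finset.range (2*k+1),
            (if F' t v < F' t u then (1:ℕ) else 0) = if t < nu then 1 else 0 := by
          intro t ht; have ht' := Finset.mem_range.mp ht
          rw [hvu t ht', hvv t ht']
          split_ifs <;> omega
        rw [Finset.sum_congr rfl hold, sum_ite_lt', hρ1u, hρ1v, hρ2u, hρ2v]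
        by_cases hT : T' u v <;> simp [hnudef, hT, hKdef] <;> omega
      · -- case (u, j) with j ∈ Vs
        have hij0 : u ≠ j := hiu ▸ hij
        have hjx : j ∈ Vs := (hmem j).mpr ⟨Ne.symm hij0, hjv⟩
        rw [hiu]
        have hold : ∀ t ∈ Finset.range (2*k+1),
            (if F' t j < F' t u then (1:ℕ) else 0) = if t < k then 1 else 0 := by
          intro t ht; have ht' := Finset.mem_range.mp ht
          rw [hvx t ht' j hjx, hvu t ht']
          have hM := hMt t ⟨j, hjx⟩
          split_ifs <;> omega
        rw [Finset.sum_congr rfl hold, sum_ite_lt', hρ1u, hρ2u, hρ1x j hjx, hρ2x j hjx]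
        have h1 := hιlt ⟨j, hjx⟩
        by_cases hT1 : T' u j <;> by_cases hT2 : T' v j <;>
          simp [hT1, hT2, hKdef] <;> split_ifs <;> omega
    · by_cases hiv : i = v
      · by_cases hju : j = u
        · -- case (v, u)
          rw [hiv, hju]
          have hold : ∀ t ∈ Finset.range (2*k+1),
              (if F' t u < F' t v then (1:ℕ) else 0) = if t < nu then 0 else 1 := by
            intro t ht; have ht' := Finset.mem_range.mp ht
            rw [hvu t ht', hvv t ht']
            split_ifs <;> omega
          rw [Finset.sum_congr rfl hold, sum_ite_nlt', hρ1u, hρ1v, hρ2u, hρ2v]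
          have h3 : T' v u ↔ ¬ T' u v := htot v u (Ne.symm huv)
          by_cases hT : T' u v <;> simp [hnudef, hT, hKdef, h3] <;> omega
        · -- case (v, j) with j ∈ Vs
          have hij0 : v ≠ j := hiv ▸ hij
          have hjx : j ∈ Vs := (hmem j).mpr ⟨hju, Ne.symm hij0⟩
          rw [hiv]
          have hold : ∀ t ∈ Finset.range (2*k+1),
              (if F' t j < F' t v then (1:ℕ) else 0) = if t < k then 1 else 0 := by
            intro t ht; have ht' := Finset.mem_range.mp ht
            rw [hvx t ht' j hjx, hvv t ht']
            have hM := hMt t ⟨j, hjx⟩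
            split_ifs <;> omega
          rw [Finset.sum_congr rfl hold, sum_ite_lt', hρ1v, hρ2v, hρ1x j hjx, hρ2x j hjx]
          have h1 := hιlt ⟨j, hjx⟩
          by_cases hT1 : T' u j <;> by_cases hT2 : T' v j <;>
            simp [hT1, hT2, hKdef] <;> split_ifs <;> omega
      · have hix : i ∈ Vs := (hmem i).mpr ⟨hiu, hiv⟩
        by_cases hju : j = u
        · -- case (i, u) with i ∈ Vs
          rw [hju]
          have hold : ∀ t ∈ Finset.range (2*k+1),
              (if F' t u < F' t i then (1:ℕ) else 0) = if t < k then 0 else 1 := by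
            intro t ht; have ht' := Finset.mem_range.mp ht
            rw [hvx t ht' i hix, hvu t ht']
            have hM := hMt t ⟨i, hix⟩
            split_ifs <;> omega
          rw [Finset.sum_congr rfl hold, sum_ite_nlt', hρ1u, hρ2u, hρ1x i hix, hρ2x i hix]
          have h1 := hιlt ⟨i, hix⟩
          have h3 : T' i u ↔ ¬ T' u i := htot i u hiu
          by_cases hT1 : T' u i <;> by_cases hT2 : T' v i <;>
            simp [hT1, hT2, hKdef, h3] <;> split_ifs <;> omega
        · by_cases hjv : j = v
          · -- case (i, v) with i ∈ Vs
            rw [hjv]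
            have hold : ∀ t ∈ Finset.range (2*k+1),
                (if F' t v < F' t i then (1:ℕ) else 0) = if t < k then 0 else 1 := by
              intro t ht; have ht' := Finset.mem_range.mp ht
              rw [hvx t ht' i hix, hvv t ht']
              have hM := hMt t ⟨i, hix⟩
              split_ifs <;> omega
            rw [Finset.sum_congr rfl hold, sum_ite_nlt', hρ1v, hρ2v, hρ1x i hix, hρ2x i hix]
            have h1 := hιlt ⟨i, hix⟩
            have h3 : T' i v ↔ ¬ T' v i := htot i v hiv
            by_cases hT1 : T' v i <;> by_cases hT2 : T' u i <;>
              simp [hT1, hT2, hKdef, h3] <;> split_ifs <;> omega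
          · -- case (i, j) both in Vs
            have hjx : j ∈ Vs := (hmem j).mpr ⟨hju, hjv⟩
            have hij' : (⟨i, hix⟩ : {x // x ∈ Vs}) ≠ ⟨j, hjx⟩ :=
              fun h => hij (congrArg Subtype.val h)
            have hold : ∀ t ∈ Finset.range (2*k+1),
                (if F' t j < F' t i then (1:ℕ) else 0)
                  = if F t ⟨j, hjx⟩ < F t ⟨i, hix⟩ then 1 else 0 := by
              intro t ht; have ht' := Finset.mem_range.mp ht
              rw [hvx t ht' i hix, hvx t ht' j hjx]
            have hcard2 : ((Finset.range (2*k+1)).filter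
                (fun t => F t ⟨j, hjx⟩ < F t ⟨i, hix⟩)).card
                = k + (if T' i j then 1 else 0) := hF ⟨i, hix⟩ ⟨j, hjx⟩ hij'
            rw [Finset.sum_congr rfl hold, ← Finset.card_filter, hcard2,
              hρ1x i hix, hρ1x j hjx, hρ2x i hix, hρ2x j hjx]
            have hax := hιlt ⟨i, hix⟩
            have hay := hιlt ⟨j, hjx⟩
            have hne : (e ⟨i, hix⟩ : ℕ) ≠ (e ⟨j, hjx⟩ : ℕ) := hιne _ _ hij'
            by_cases h1 : T' u i <;> by_cases h2 : T' v i <;>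
              by_cases h3 : T' u j <;> by_cases h4 : T' v j <;>
              by_cases h5 : T' i j <;>
              simp [h1, h2, h3, h4, h5, hKdef] <;> split_ifs <;> omega

set_option maxHeartbeats 1000000 in
/-- For `n` positive and divisible by 4, every tournament on `n` vertices is realized by a
set of `n` dice with `n + 1` sides each. -/
theorem tournament_realized_by_dice_four_dvd (n : ℕ) (hn : 0 < n) (hdvd : 4 ∣ n)
    (T : Fin n → Fin n → Prop)
    (hirr : ∀ i, ¬ T i i)
    (htot : ∀ i j : Fin n, i ≠ j → (T i j ↔ ¬ T j i)) :
    ∃ X : Fin n → Fin (n + 1) → ℕ,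
      ∀ i j : Fin n, i ≠ j →
        (T i j ↔ 2 * faceWins (n + 1) (X i) (X j) > (n + 1) ^ 2) := by
  classical
  obtain ⟨k, rfl⟩ : ∃ k, n = 2*k := ⟨n/2, by omega⟩
  obtain ⟨F, hF⟩ := exists_orders k (Fin (2*k)) (by simp) T hirr htot
  set M : ℕ := (Finset.range (2*k+1)).sup
      (fun t => Finset.univ.sup fun x : Fin (2*k) => (F t x).natAbs) with hMdef
  have hM : ∀ (a : Fin (2*k+1)) (x : Fin (2*k)), (F (a:ℕ) x).natAbs ≤ M := by
    intro a x
    calc (F (a:ℕ) x).natAbs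
        ≤ Finset.univ.sup (fun x : Fin (2*k) => (F (a:ℕ) x).natAbs) :=
          Finset.le_sup (f := fun x => (F (a:ℕ) x).natAbs) (Finset.mem_univ x)
      _ ≤ M := Finset.le_sup
          (f := fun t => Finset.univ.sup fun x : Fin (2*k) => (F t x).natAbs)
          (Finset.mem_range.mpr a.isLt)
  set X : Fin (2*k) → Fin (2*k+1) → ℕ :=
    fun i a => (2*M+1) * (a:ℕ) + (F (a:ℕ) i + (M:ℤ)).toNat with hXdef
  have key : ∀ (i j : Fin (2*k)) (a b : Fin (2*k+1)),
      (X j b < X i a) ↔ ((b:ℕ) < (a:ℕ) ∨ ((b:ℕ) = (a:ℕ) ∧ F (a:ℕ) j < F (a:ℕ) i)) := by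
    intro i j a b
    have hb1 := hM a i
    have hb2 := hM b j
    have hb3 := hM a j
    simp only [hXdef]
    rcases lt_trichotomy (a:ℕ) (b:ℕ) with h | h | h
    · have hmul : (2*M+1)*(a:ℕ) + (2*M+1) ≤ (2*M+1)*(b:ℕ) := by
        calc (2*M+1)*(a:ℕ) + (2*M+1) = (2*M+1)*((a:ℕ)+1) := by ring
          _ ≤ (2*M+1)*(b:ℕ) := Nat.mul_le_mul_left _ (by omega)
      omega
    · have hba : b = a := Fin.ext h.symm
      subst hba
      omega
    · have hmul : (2*M+1)*(b:ℕ) + (2*M+1) ≤ (2*M+1)*(a:ℕ) := by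
        calc (2*M+1)*(b:ℕ) + (2*M+1) = (2*M+1)*((b:ℕ)+1) := by ring
          _ ≤ (2*M+1)*(a:ℕ) := Nat.mul_le_mul_left _ (by omega)
      omega
  have hfW : ∀ (i j : Fin (2*k)), faceWins (2*k+1) (X i) (X j)
      = (∑ a ∈ Finset.range (2*k+1), a)
        + ((Finset.range (2*k+1)).filter (fun t => F t j < F t i)).card := by
    intro i j
    simp only [faceWins, gt_iff_lt]
    rw [Finset.card_filter, Fintype.sum_prod_type]
    have hpt : ∀ a : Fin (2*k+1),
        (∑ b : Fin (2*k+1), if X j b < X i a then (1:ℕ) else 0)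
          = (a:ℕ) + (if F (a:ℕ) j < F (a:ℕ) i then 1 else 0) := by
      intro a
      have h1 : ∀ b : Fin (2*k+1), (if X j b < X i a then (1:ℕ) else 0)
          = (if (b:ℕ) < (a:ℕ) then 1 else 0)
            + (if (b:ℕ) = (a:ℕ) ∧ F (a:ℕ) j < F (a:ℕ) i then 1 else 0) := by
        intro b
        simp only [key i j a b]
        split_ifs <;> omega
      rw [Finset.sum_congr rfl (fun b _ => h1 b), Finset.sum_add_distrib]
      have e1 : (∑ b : Fin (2*k+1), if (b:ℕ) < (a:ℕ) then (1:ℕ) else 0) = (a:ℕ) := by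
        rw [Fin.sum_univ_eq_sum_range (fun t => if t < (a:ℕ) then (1:ℕ) else 0), sum_ite_lt']
        have := a.isLt
        omega
      have e2 : (∑ b : Fin (2*k+1),
          if (b:ℕ) = (a:ℕ) ∧ F (a:ℕ) j < F (a:ℕ) i then (1:ℕ) else 0)
          = (if F (a:ℕ) j < F (a:ℕ) i then 1 else 0) := by
        by_cases hR : F (a:ℕ) j < F (a:ℕ) i
        · simp only [hR, and_true, if_pos]
          rw [Fin.sum_univ_eq_sum_range (fun t => if t = (a:ℕ) then (1:ℕ) else 0)]
          rw [Finset.sum_ite_eq' (Finset.range (2*k+1)) (a:ℕ) (fun _ => (1:ℕ))]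
          simp [a.isLt]
        · simp [hR]
      rw [e1, e2]
    rw [Finset.sum_congr rfl (fun a _ => hpt a), Finset.sum_add_distrib]
    congr 1
    · exact Fin.sum_univ_eq_sum_range (fun t => t) (2*k+1)
    · rw [Fin.sum_univ_eq_sum_range (fun t => if F t j < F t i then (1:ℕ) else 0),
        ← Finset.card_filter]
  refine ⟨X, ?_⟩
  intro i j hij
  have hC : (∑ a ∈ Finset.range (2*k+1), a) * 2 = (2*k+1) * (2*k) := by
    rw [Finset.sum_range_id_mul_two]
    congr 1
  have hsq : (2*k+1)^2 = (2*k+1)*(2*k) + (2*k+1) := by ring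
  rw [hfW i j, hF i j hij, hsq]
  generalize hP : (2*k+1)*(2*k) = P at hC ⊢
  by_cases hT : T i j <;> simp [hT] <;> omega
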